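/- arXiv:1711.00516 — 7 statements merged into one kernel-verified Lean document; each statement's English description precedes it below -/
import Mathlib

section
/- Let λ, τ ∈ ℝ and u, v ∈ 𝓢(ℝ;ℂ), and set w := (u+v)/2. Suppose that for every x ∈ ℝ, v(x) = u(x) + iτ·w''(x) + iλτ·((|u(x)|² + |v(x)|²)/2)·w(x). Then ∫_ℝ |v(x)|² dx = ∫_ℝ |u(x)|² dx. -/
open MeasureTheory Complex

-- pointwise algebra lemma
lemma ptwise (a b z : ℂ) (r t l : ℝ)
    (h : b = a + Complex.I * (t:ℂ) * z + Complex.I * (l:ℂ) * (t:ℂ) * ((r:ℂ)/2) * ((a+b)/2)) :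
    ‖b‖^2 = ‖a‖^2 + (-2*t*((starRingEnd ℂ ((a+b)/2)) * z).im) := by
  have h4 : (4:ℂ)*b = 4*a + 4*(Complex.I*(t:ℂ)*z) + Complex.I*(l:ℂ)*(t:ℂ)*(r:ℂ)*(a+b) := by
    linear_combination 4*h
  have h1 := congrArg Complex.re h4
  have h2 := congrArg Complex.im h4
  simp only [Complex.mul_re, Complex.mul_im, Complex.add_re, Complex.add_im, Complex.I_re,
    Complex.I_im, Complex.ofReal_re, Complex.ofReal_im, Complex.re_ofNat, Complex.im_ofNat] at h1 h2
  have hg : ((starRingEnd ℂ ((a+b)/2)) * z).im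
      = ((a.re+b.re)/2) * z.im - ((a.im+b.im)/2) * z.re := by
    simp [Complex.mul_im, Complex.div_re, Complex.div_im, Complex.normSq_apply]
    ring
  rw [hg]
  simp only [Complex.sq_norm, Complex.normSq_apply]
  linear_combination ((a.re+b.re)/4) * h1 + ((a.im+b.im)/4) * h2

lemma schwartz_conj_mul_integrable (f g : SchwartzMap ℝ ℂ) :
    Integrable (fun x => starRingEnd ℂ (f x) * g x) := by
  apply g.integrable.bdd_mul (c := SchwartzMap.seminorm ℝ 0 0 f)
  · exact (Complex.continuous_conj.comp f.continuous).aestronglyMeasurable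
  · exact Filter.Eventually.of_forall (fun x => by
      simpa using SchwartzMap.norm_le_seminorm ℝ f x)

/-- Charge conservation of one step of the Crank–Nicolson type scheme:
if `v = u + iτ w'' + iλτ ((|u|²+|v|²)/2) w` pointwise, with `w = (u+v)/2`, then
`∫ |v|² = ∫ |u|²`. -/
theorem stmt1 (lam τ : ℝ) (u v : SchwartzMap ℝ ℂ)
    (hstep : ∀ x : ℝ,
      v x = u x + Complex.I * (τ : ℂ) *
          deriv (deriv (fun y : ℝ => (u y + v y) / 2)) x
        + Complex.I * (lam : ℂ) * (τ : ℂ) *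
          (((‖u x‖ ^ 2 + ‖v x‖ ^ 2 : ℝ) : ℂ) / 2) * ((u x + v x) / 2)) :
    ∫ x : ℝ, ‖v x‖ ^ 2 = ∫ x : ℝ, ‖u x‖ ^ 2 := by
  set w : SchwartzMap ℝ ℂ := ((2:ℂ)⁻¹) • (u + v) with hw
  set w1 : SchwartzMap ℝ ℂ := SchwartzMap.derivCLM ℝ ℂ w with hw1def
  set w2 : SchwartzMap ℝ ℂ := SchwartzMap.derivCLM ℝ ℂ w1 with hw2def
  have hwx : ∀ x, w x = (u x + v x) / 2 := by
    intro x
    rw [hw]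
    rw [SchwartzMap.smul_apply, SchwartzMap.add_apply]
    rw [smul_eq_mul]; ring
  have hfun : (fun y : ℝ => (u y + v y) / 2) = ⇑w := funext fun x => (hwx x).symm
  have hd1 : deriv (⇑w) = ⇑w1 := funext fun x => (SchwartzMap.derivCLM_apply ℝ w x).symm
  have hd2 : ∀ x, deriv (deriv (fun y : ℝ => (u y + v y)/2)) x = w2 x := by
    intro x
    rw [hfun, hd1]
    exact (SchwartzMap.derivCLM_apply ℝ w1 x).symm
  -- derivatives as HasDerivAt
  have hdw : ∀ x, HasDerivAt (⇑w) (w1 x) x := fun x => by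
    have := w.differentiableAt.hasDerivAt (x := x)
    rwa [show deriv (⇑w) x = w1 x from congrFun hd1 x] at this
  have hdw1 : ∀ x, HasDerivAt (⇑w1) (w2 x) x := fun x => by
    have := w1.differentiableAt.hasDerivAt (x := x)
    rwa [show deriv (⇑w1) x = w2 x from (SchwartzMap.derivCLM_apply ℝ w1 x).symm] at this
  have hdcw : ∀ x, HasDerivAt (fun y => starRingEnd ℂ (w y)) (starRingEnd ℂ (w1 x)) x :=
    fun x => (hdw x).star
  -- integration by parts
  have ibp : ∫ x : ℝ, starRingEnd ℂ (w x) * w2 x = - ∫ x : ℝ, starRingEnd ℂ (w1 x) * w1 x := by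
    have h1 : Integrable ((fun x => starRingEnd ℂ (w x)) * ⇑w2) := by
      simpa [Pi.mul_def] using schwartz_conj_mul_integrable w w2
    have h2 : Integrable ((fun x => starRingEnd ℂ (w1 x)) * ⇑w1) := by
      simpa [Pi.mul_def] using schwartz_conj_mul_integrable w1 w1
    have h3 : Integrable ((fun x => starRingEnd ℂ (w x)) * ⇑w1) := by
      simpa [Pi.mul_def] using schwartz_conj_mul_integrable w w1
    exact integral_mul_deriv_eq_deriv_mul_of_integrable (fun x _ => hdcw x) (fun x _ => hdw1 x) h1 h2 h3
  -- imaginary part of the integral is zero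
  have him : (∫ x : ℝ, starRingEnd ℂ (w x) * w2 x).im = 0 := by
    rw [ibp, Complex.neg_im]
    have h0 := integral_im (𝕜 := ℂ) (schwartz_conj_mul_integrable w1 w1)
    simp only [RCLike.im_eq_complex_im] at h0
    rw [← h0]
    simp [Complex.mul_im, mul_comm]
  -- pointwise identity
  have hpt : ∀ x, ‖v x‖^2 = ‖u x‖^2 + (-2*τ*((starRingEnd ℂ (w x)) * w2 x).im) := by
    intro x
    have h := hstep x
    rw [hd2 x] at h
    have := ptwise (u x) (v x) (w2 x) (‖u x‖ ^ 2 + ‖v x‖ ^ 2) τ lam h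
    rwa [← hwx x] at this
  -- integrability of the pieces
  have hIu : Integrable (fun x : ℝ => ‖u x‖^2) := by
    have := (u.integrable (μ := volume)).norm.bdd_mul (c := SchwartzMap.seminorm ℝ 0 0 u)
      (u.continuous.norm.aestronglyMeasurable)
      (Filter.Eventually.of_forall (fun x => by
        simpa using SchwartzMap.norm_le_seminorm ℝ u x))
    simpa [pow_two] using this
  have hIim : Integrable (fun x : ℝ => -2*τ*((starRingEnd ℂ (w x)) * w2 x).im) :=
    ((schwartz_conj_mul_integrable w w2).im.const_mul _)
  calc ∫ x : ℝ, ‖v x‖ ^ 2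
      = ∫ x : ℝ, (‖u x‖^2 + (-2*τ*((starRingEnd ℂ (w x)) * w2 x).im)) := by
        exact integral_congr_ae (Filter.Eventually.of_forall hpt)
    _ = (∫ x : ℝ, ‖u x‖^2) + ∫ x : ℝ, -2*τ*((starRingEnd ℂ (w x)) * w2 x).im :=
        integral_add hIu hIim
    _ = ∫ x : ℝ, ‖u x‖ ^ 2 := by
        have : ∫ x : ℝ, -2*τ*((starRingEnd ℂ (w x)) * w2 x).im
            = -2*τ*(∫ x : ℝ, ((starRingEnd ℂ (w x)) * w2 x).im) := by
          rw [integral_const_mul]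
        rw [this]
        have h0 := integral_im (𝕜 := ℂ) (schwartz_conj_mul_integrable w w2)
        simp only [RCLike.im_eq_complex_im] at h0
        rw [h0, him]
        ring
end

section
/- Let a > 0, τ ≥ 0, λ ∈ ℝ and M ∈ ℕ. Let u_0, u_1, …, u_M and v_1, …, v_M be elements of 𝓢(ℝ;ℂ), and let g_0, …, g_{M−1} and θ_0, …, θ_{M−1} : ℝ → ℝ be measurable with g_m(x) ≤ −a for all m and all x. Suppose that for each m < M, writing w_m := (u_m + v_{m+1})/2: (i) v_{m+1}(x) = u_m(x) + iτ·w_m''(x) + iλτ·((|u_m(x)|² + |v_{m+1}(x)|²)/2)·w_m(x) for all x, and (ii) u_{m+1}(x) = exp(τ·g_m(x) + i·θ_m(x))·v_{m+1}(x) for all x. Then for every m ≤ M, ∫_ℝ |u_m(x)|² dx ≤ e^{−2amτ} ∫_ℝ |u_0(x)|² dx. -/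
open MeasureTheory Complex Filter Set Topology


lemma normsq_helper (z : ℂ) : ‖z‖^2 = z.re^2 + z.im^2 := by
  rw [Complex.sq_norm, Complex.normSq_apply]; ring
  
lemma ptwise_s2 (τ c : ℝ) (p q D : ℂ)
    (h : q = p + Complex.I * (τ:ℂ) * D + Complex.I * (c:ℂ) * ((p+q)/2)) :
    ‖q‖^2 - ‖p‖^2 = -(2*τ) * (D * (starRingEnd ℂ) ((p+q)/2)).im := by
  have h1 : q.re = (p + Complex.I * (τ:ℂ) * D + Complex.I * (c:ℂ) * ((p+q)/2)).re := by rw [← h]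
  have h2 : q.im = (p + Complex.I * (τ:ℂ) * D + Complex.I * (c:ℂ) * ((p+q)/2)).im := by rw [← h]
  simp only [Complex.add_re, Complex.add_im, Complex.mul_re, Complex.mul_im, Complex.I_re,
    Complex.I_im, Complex.ofReal_re, Complex.ofReal_im, Complex.div_re, Complex.div_im,
    Complex.normSq_apply, Complex.re_ofNat, Complex.im_ofNat] at h1 h2
  rw [normsq_helper, normsq_helper]
  simp only [Complex.mul_im, Complex.conj_re, Complex.conj_im, Complex.div_re, Complex.div_im,
    Complex.add_re, Complex.add_im, Complex.normSq_apply, Complex.re_ofNat, Complex.im_ofNat]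
  ring_nf
  ring_nf at h1 h2
  linear_combination (q.re + p.re) * h1 + (q.im + p.im) * h2

lemma schwartz_tendsto_zero (f : SchwartzMap ℝ ℂ) (l : Filter ℝ) (hl : l ≤ cocompact ℝ) :
    Tendsto (fun x => f x) l (nhds 0) := by
  have := f.toZeroAtInfty.zero_at_infty'
  refine (this.mono_left hl).congr fun x => ?_
  simp

lemma integrable_prod (W2 W : SchwartzMap ℝ ℂ) :
    Integrable (fun x => ((W2 x) * (starRingEnd ℂ) (W x)).im) := by
  refine ((W2.integrable.norm.const_mul (SchwartzMap.seminorm ℝ 0 0 W)).mono' ?_ ?_)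
  · exact (Complex.continuous_im.comp ((W2.continuous.mul
      (Complex.continuous_conj.comp W.continuous)))).aestronglyMeasurable
  · filter_upwards with x
    rw [Real.norm_eq_abs]
    calc |((W2 x) * (starRingEnd ℂ) (W x)).im| ≤ ‖(W2 x) * (starRingEnd ℂ) (W x)‖ :=
          Complex.abs_im_le_norm _
      _ = ‖W2 x‖ * ‖W x‖ := by rw [norm_mul, RCLike.norm_conj]
      _ ≤ ‖W x‖ * ‖W2 x‖ := le_of_eq (mul_comm _ _)
      _ ≤ SchwartzMap.seminorm ℝ 0 0 W * ‖W2 x‖ :=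
          mul_le_mul_of_nonneg_right (SchwartzMap.norm_le_seminorm ℝ W x) (norm_nonneg _)

lemma integral_im_zero (W : SchwartzMap ℝ ℂ) :
    ∫ x : ℝ, (deriv (deriv (⇑W)) x * (starRingEnd ℂ) (W x)).im = 0 := by
  set W1 := SchwartzMap.derivCLM ℝ ℂ W with hW1def
  set W2 := SchwartzMap.derivCLM ℝ ℂ W1 with hW2def
  have hW1 : ∀ x, deriv (⇑W) x = W1 x := fun x => (SchwartzMap.derivCLM_apply ℝ W x).symm
  have hW1' : deriv (⇑W) = ⇑W1 := funext hW1
  have hW2 : ∀ x, deriv (deriv (⇑W)) x = W2 x := by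
    intro x
    rw [hW1']
    exact (SchwartzMap.derivCLM_apply ℝ W1 x).symm
  set h : ℝ → ℝ := fun x => (W1 x * (starRingEnd ℂ) (W x)).im with hdef
  set h' : ℝ → ℝ := fun x => (W2 x * (starRingEnd ℂ) (W x)).im with h'def
  have hderiv : ∀ x : ℝ, HasDerivAt h (h' x) x := by
    intro x
    have hW : HasDerivAt (⇑W) (W1 x) x := by
      rw [← hW1]; exact (W.differentiable x).hasDerivAt
    have hWd : HasDerivAt (⇑W1) (W2 x) x := by
      show HasDerivAt (⇑W1) ((SchwartzMap.derivCLM ℝ ℂ W1) x) x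
      rw [SchwartzMap.derivCLM_apply]
      exact (W1.differentiable x).hasDerivAt
    have hconj : HasDerivAt (fun y => (starRingEnd ℂ) (W y)) ((starRingEnd ℂ) (W1 x)) x := by
      simpa using hW.star
    have hmul := hWd.mul hconj
    have key := (Complex.imCLM.hasFDerivAt.comp_hasDerivAt x hmul)
    simp only [Function.comp_def, Complex.imCLM_apply, map_add] at key
    have him : (W1 x * (starRingEnd ℂ) (W1 x)).im = 0 := by simp [Complex.mul_conj]
    rw [him, add_zero] at key
    exact key
  have hbound : ∀ x, ‖h x‖ ≤ ‖W1 x‖ * ‖W x‖ := by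
    intro x
    rw [Real.norm_eq_abs]
    calc |h x| ≤ ‖W1 x * (starRingEnd ℂ) (W x)‖ := Complex.abs_im_le_norm _
      _ = ‖W1 x‖ * ‖W x‖ := by rw [norm_mul, RCLike.norm_conj]
  have htop : Tendsto h atTop (nhds 0) := by
    apply squeeze_zero_norm hbound
    have h1 := (schwartz_tendsto_zero W1 atTop (by rw [cocompact_eq_atBot_atTop]; exact le_sup_right)).norm
    have h2 := (schwartz_tendsto_zero W atTop (by rw [cocompact_eq_atBot_atTop]; exact le_sup_right)).norm
    simpa using h1.mul h2
  have hbot : Tendsto h atBot (nhds 0) := by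
    apply squeeze_zero_norm hbound
    have h1 := (schwartz_tendsto_zero W1 atBot (by rw [cocompact_eq_atBot_atTop]; exact le_sup_left)).norm
    have h2 := (schwartz_tendsto_zero W atBot (by rw [cocompact_eq_atBot_atTop]; exact le_sup_left)).norm
    simpa using h1.mul h2
  have hint : Integrable h' := _root_.integrable_prod W2 W
  have hIoi : ∫ x in Ioi (0:ℝ), h' x = 0 - h 0 :=
    integral_Ioi_of_hasDerivAt_of_tendsto' (fun x _ => hderiv x) hint.integrableOn htop
  have hIic : ∫ x in Iic (0:ℝ), h' x = h 0 - 0 :=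
    integral_Iic_of_hasDerivAt_of_tendsto' (fun x _ => hderiv x) hint.integrableOn hbot
  have hsplit : (∫ x in Iic (0:ℝ), h' x) + ∫ x in Ioi (0:ℝ), h' x = ∫ x, h' x :=
    intervalIntegral.integral_Iic_add_Ioi hint.integrableOn hint.integrableOn
  have hz : ∫ x, h' x = 0 := by rw [← hsplit, hIoi, hIic]; ring
  rw [← hz]
  apply integral_congr_ae
  filter_upwards with x
  rw [hW2 x]

lemma integrable_normsq (f : SchwartzMap ℝ ℂ) : Integrable (fun x => ‖f x‖^2) := by
  refine ((f.integrable.norm.const_mul (SchwartzMap.seminorm ℝ 0 0 f)).mono' ?_ ?_)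
  · exact (f.continuous.norm.pow 2).aestronglyMeasurable
  · filter_upwards with x
    rw [Real.norm_eq_abs, _root_.abs_of_nonneg (by positivity), pow_two]
    exact mul_le_mul_of_nonneg_right (SchwartzMap.norm_le_seminorm ℝ f x) (norm_nonneg _)

lemma charge_conserved (τ lam : ℝ) (U V : SchwartzMap ℝ ℂ)
    (hstep : ∀ x : ℝ,
      V x = U x + Complex.I * (τ : ℂ) *
          deriv (deriv (fun y : ℝ => (U y + V y) / 2)) x
        + Complex.I * (lam : ℂ) * (τ : ℂ) *
          (((‖U x‖ ^ 2 + ‖V x‖ ^ 2 : ℝ) : ℂ) / 2) *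
          ((U x + V x) / 2)) :
    ∫ x : ℝ, ‖V x‖ ^ 2 = ∫ x : ℝ, ‖U x‖ ^ 2 := by
  set W : SchwartzMap ℝ ℂ := (2 : ℝ)⁻¹ • (U + V) with hWdef
  have hWapp : ∀ x, W x = (U x + V x) / 2 := by
    intro x
    rw [hWdef]
    simp [SchwartzMap.smul_apply, SchwartzMap.add_apply, Complex.real_smul]
    ring
  have hfun : (fun y : ℝ => (U y + V y) / 2) = ⇑W := funext fun x => (hWapp x).symm
  have hpt : ∀ x : ℝ, ‖V x‖ ^ 2 = ‖U x‖ ^ 2 +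
      (-(2 * τ)) * (deriv (deriv (⇑W)) x * (starRingEnd ℂ) (W x)).im := by
    intro x
    have h := hstep x
    rw [hfun] at h
    have hc : Complex.I * (lam : ℂ) * (τ : ℂ) * (((‖U x‖ ^ 2 + ‖V x‖ ^ 2 : ℝ) : ℂ) / 2)
        = Complex.I * ((lam * τ * ((‖U x‖ ^ 2 + ‖V x‖ ^ 2) / 2) : ℝ) : ℂ) := by
      push_cast; ring
    have h' : V x = U x + Complex.I * (τ : ℂ) * (deriv (deriv (⇑W)) x)
        + Complex.I * ((lam * τ * ((‖U x‖ ^ 2 + ‖V x‖ ^ 2) / 2) : ℝ) : ℂ) * ((U x + V x) / 2) := by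
      conv_lhs => rw [h]
      push_cast
      ring
    have := ptwise_s2 τ (lam * τ * ((‖U x‖ ^ 2 + ‖V x‖ ^ 2) / 2)) (U x) (V x)
      (deriv (deriv (⇑W)) x) h'
    rw [hWapp x]
    linarith [this]
  calc ∫ x : ℝ, ‖V x‖ ^ 2
      = ∫ x : ℝ, (‖U x‖ ^ 2 + (-(2 * τ)) * (deriv (deriv (⇑W)) x * (starRingEnd ℂ) (W x)).im) := by
        exact integral_congr_ae (Eventually.of_forall hpt)
    _ = (∫ x : ℝ, ‖U x‖ ^ 2) + (-(2 * τ)) * ∫ x : ℝ, (deriv (deriv (⇑W)) x * (starRingEnd ℂ) (W x)).im := by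
        have hi2 : Integrable (fun x => (deriv (deriv (⇑W)) x * (starRingEnd ℂ) (W x)).im) := by
          have hh := _root_.integrable_prod (SchwartzMap.derivCLM ℝ ℂ (SchwartzMap.derivCLM ℝ ℂ W)) W
          refine hh.congr (Eventually.of_forall fun x => ?_)
          simp only [SchwartzMap.derivCLM_apply]
          rw [show (⇑(SchwartzMap.derivCLM ℝ ℂ W) : ℝ → ℂ) = deriv (⇑W) from
            funext fun y => SchwartzMap.derivCLM_apply ℝ W y]
        rw [integral_add (integrable_normsq U) (hi2.const_mul _), integral_const_mul]
    _ = ∫ x : ℝ, ‖U x‖ ^ 2 := by rw [integral_im_zero W]; ring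


/-- Pathwise exponential charge decay for the splitting Crank–Nicolson
scheme: one deterministic Crank–Nicolson step followed by the multiplication step
`u_{m+1} = exp(τ g_m + i θ_m) v_{m+1}` with `g_m ≤ -a` yields
`∫|u_m|² ≤ e^{-2amτ} ∫|u_0|²` for all `m ≤ M`. -/
theorem stmt2 (a τ lam : ℝ) (ha : 0 < a) (hτ : 0 ≤ τ) (M : ℕ)
    (u : ℕ → SchwartzMap ℝ ℂ) (v : ℕ → SchwartzMap ℝ ℂ)
    (g θ : ℕ → ℝ → ℝ)
    (hg : ∀ m, Measurable (g m)) (hθ : ∀ m, Measurable (θ m))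
    (hga : ∀ m, ∀ x : ℝ, g m x ≤ -a)
    (hstep : ∀ m < M, ∀ x : ℝ,
      v (m + 1) x = u m x + Complex.I * (τ : ℂ) *
          deriv (deriv (fun y : ℝ => (u m y + v (m + 1) y) / 2)) x
        + Complex.I * (lam : ℂ) * (τ : ℂ) *
          (((‖u m x‖ ^ 2 + ‖v (m + 1) x‖ ^ 2 : ℝ) : ℂ) / 2) *
          ((u m x + v (m + 1) x) / 2))
    (hmult : ∀ m < M, ∀ x : ℝ,
      u (m + 1) x = Complex.exp ((τ * g m x : ℝ) + Complex.I * (θ m x : ℝ)) * v (m + 1) x) :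
    ∀ m ≤ M, ∫ x : ℝ, ‖u m x‖ ^ 2 ≤
      Real.exp (-2 * a * m * τ) * ∫ x : ℝ, ‖u 0 x‖ ^ 2 := by
  intro m
  induction m with
  | zero => intro _; norm_num
  | succ n ih =>
    intro hm
    have hn : n < M := Nat.lt_of_lt_of_le (Nat.lt_succ_self n) hm
    have ihn := ih (Nat.le_of_lt hn)
    have hcc : ∫ x : ℝ, ‖v (n+1) x‖^2 = ∫ x : ℝ, ‖u n x‖^2 :=
      charge_conserved τ lam (u n) (v (n+1)) (hstep n hn)
    have hptm : ∀ x : ℝ, ‖u (n+1) x‖^2 ≤ Real.exp (-2*a*τ) * ‖v (n+1) x‖^2 := by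
      intro x
      have hmx := hmult n hn x
      have hnorm : ‖u (n+1) x‖ = Real.exp (τ * g n x) * ‖v (n+1) x‖ := by
        rw [hmx, norm_mul, Complex.norm_exp]
        congr 2
        simp
      have heq : ‖u (n+1) x‖^2 = Real.exp (τ * g n x + τ * g n x) * ‖v (n+1) x‖^2 := by
        rw [hnorm, mul_pow]
        congr 1
        rw [pow_two, ← Real.exp_add]
      rw [heq]
      apply mul_le_mul_of_nonneg_right _ (by positivity)
      apply Real.exp_le_exp.mpr
      have : τ * g n x ≤ τ * (-a) := mul_le_mul_of_nonneg_left (hga n x) hτ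
      nlinarith
    calc ∫ x : ℝ, ‖u (n+1) x‖^2
        ≤ ∫ x : ℝ, Real.exp (-2*a*τ) * ‖v (n+1) x‖^2 :=
          integral_mono (integrable_normsq (u (n+1)))
            ((integrable_normsq (v (n+1))).const_mul _) hptm
      _ = Real.exp (-2*a*τ) * ∫ x : ℝ, ‖v (n+1) x‖^2 := integral_const_mul _ _
      _ = Real.exp (-2*a*τ) * ∫ x : ℝ, ‖u n x‖^2 := by rw [hcc]
      _ ≤ Real.exp (-2*a*τ) * (Real.exp (-2 * a * n * τ) * ∫ x : ℝ, ‖u 0 x‖^2) :=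
          mul_le_mul_of_nonneg_left ihn (Real.exp_nonneg _)
      _ = Real.exp (-2 * a * (n+1 : ℕ) * τ) * ∫ x : ℝ, ‖u 0 x‖^2 := by
          rw [← mul_assoc, ← Real.exp_add]
          congr 2
          push_cast
          ring
end

section
/- Let λ ∈ ℝ and let u : ℝ → 𝓢(ℝ;ℂ) be a curve of Schwartz functions. Suppose that for every t ∈ ℝ, the map t ↦ u(t), regarded as a curve in L²(ℝ;ℂ), is differentiable at t with derivative equal to (the L² class of) the Schwartz function i·u(t)'' + iλ·|u(t)|²·u(t). Then the charge t ↦ ∫_ℝ |u(t)(x)|² dx is constant on ℝ. -/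
open MeasureTheory Complex Filter

noncomputable section Stmt3Aux

lemma MeasureTheory.Integrable.bdd_mul_old {𝕜 : Type*} [NormedRing 𝕜] {f g : ℝ → 𝕜}
    (hg : Integrable g volume) (hf : AEStronglyMeasurable f volume)
    (hb : ∃ C, ∀ x, ‖f x‖ ≤ C) : Integrable (fun x => f x * g x) volume := by
  obtain ⟨C, hC⟩ := hb
  exact hg.bdd_mul hf (ae_of_all _ hC)

lemma integral_complex_ofReal_aux (r : ℝ → ℝ) :
    ∫ x : ℝ, ((r x : ℝ) : ℂ) = ((∫ x : ℝ, r x : ℝ) : ℂ) := integral_ofReal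

lemma schwartz_bdd (f : SchwartzMap ℝ ℂ) : ∃ C, ∀ x, ‖f x‖ ≤ C :=
  ⟨‖f.toBoundedContinuousFunction‖, fun x => by
    simpa [SchwartzMap.toBoundedContinuousFunction_apply] using
      f.toBoundedContinuousFunction.norm_coe_le_norm x⟩

lemma bdd_mul_schwartz_integrable (f : SchwartzMap ℝ ℂ) (φ : ℝ → ℂ)
    (hφm : AEStronglyMeasurable φ volume) (hφ : ∃ C, ∀ x, ‖φ x‖ ≤ C) :
    Integrable (fun x => φ x * f x) volume :=
  f.integrable.bdd_mul_old hφm hφ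

/-- Integration by parts for Schwartz functions. -/
lemma schwartz_ibp (f : SchwartzMap ℝ ℂ) :
    (∫ x : ℝ, (starRingEnd ℂ) (f x) * deriv (deriv f) x)
      = - ∫ x : ℝ, (starRingEnd ℂ) (deriv f x) * deriv f x := by
  set g := SchwartzMap.derivCLM ℝ ℂ f with hgdef
  set h := SchwartzMap.derivCLM ℝ ℂ g with hhdef
  have hg : deriv (⇑f) = ⇑g := by
    funext x; exact (SchwartzMap.derivCLM_apply ℝ f x).symm
  have hh : deriv (deriv (⇑f)) = ⇑h := by
    rw [hg]; funext x; exact (SchwartzMap.derivCLM_apply ℝ g x).symm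
  rw [hh, hg]
  have hfd : ∀ x, HasDerivAt f (g x) x := by
    intro x
    have h1 : HasDerivAt f (deriv (⇑f) x) x := f.differentiableAt.hasDerivAt
    rwa [hg] at h1
  have hgd : ∀ x, HasDerivAt g (h x) x := by
    intro x
    have h1 : HasDerivAt g (deriv (⇑g) x) x := g.differentiableAt.hasDerivAt
    have hg' : deriv (⇑g) = ⇑h := by
      funext y; exact (SchwartzMap.derivCLM_apply ℝ g y).symm
    rwa [hg'] at h1
  have hcont : ∀ (w : SchwartzMap ℝ ℂ),
      AEStronglyMeasurable (fun x => (starRingEnd ℂ) (w x)) volume :=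
    fun w => (Complex.continuous_conj.comp w.continuous).aestronglyMeasurable
  have hbd : ∀ (w : SchwartzMap ℝ ℂ), ∃ C, ∀ x, ‖(starRingEnd ℂ) (w x)‖ ≤ C := by
    intro w
    obtain ⟨C, hC⟩ := schwartz_bdd w
    exact ⟨C, fun x => by simpa using hC x⟩
  exact MeasureTheory.integral_mul_deriv_eq_deriv_mul_of_integrable
    (u := fun x => (starRingEnd ℂ) (f x)) (u' := fun x => (starRingEnd ℂ) (g x))
    (v := ⇑g) (v' := ⇑h)
    (fun x _ => (hfd x).star) (fun x _ => hgd x)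
    (bdd_mul_schwartz_integrable h _ (hcont f) (hbd f))
    (bdd_mul_schwartz_integrable g _ (hcont g) (hbd g))
    (bdd_mul_schwartz_integrable g _ (hcont f) (hbd f))

lemma key (lam : ℝ) (f : SchwartzMap ℝ ℂ) :
    (∫ x : ℝ, (starRingEnd ℂ) (f x) *
        (Complex.I * deriv (deriv f) x
          + Complex.I * (lam : ℂ) * ((‖f x‖ ^ 2 : ℝ) : ℂ) * f x)).re = 0 := by
  set g := SchwartzMap.derivCLM ℝ ℂ f with hgdef
  set h := SchwartzMap.derivCLM ℝ ℂ g with hhdef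
  have hg : deriv (⇑f) = ⇑g := by
    funext x; exact (SchwartzMap.derivCLM_apply ℝ f x).symm
  have hh : deriv (deriv (⇑f)) = ⇑h := by
    rw [hg]; funext x; exact (SchwartzMap.derivCLM_apply ℝ g x).symm
  have hbdC : ∀ (w : SchwartzMap ℝ ℂ), ∃ C, ∀ x, ‖(starRingEnd ℂ) (w x) * Complex.I‖ ≤ C := by
    intro w
    obtain ⟨C, hC⟩ := schwartz_bdd w
    exact ⟨C, fun x => by simpa using hC x⟩
  -- split the integrand
  have hsplit : (fun x : ℝ => (starRingEnd ℂ) (f x) *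
        (Complex.I * deriv (deriv f) x
          + Complex.I * (lam : ℂ) * ((‖f x‖ ^ 2 : ℝ) : ℂ) * f x))
      = fun x : ℝ => ((starRingEnd ℂ) (f x) * Complex.I) * h x
          + Complex.I * ((lam * (‖f x‖ ^ 2 * ‖f x‖ ^ 2) : ℝ) : ℂ) := by
    funext x
    have hcm : (starRingEnd ℂ) (f x) * f x = (‖f x‖ : ℂ) ^ 2 := RCLike.conj_mul (f x)
    rw [hh]
    push_cast
    linear_combination Complex.I * (lam : ℂ) * ((‖f x‖ : ℂ) ^ 2) * hcm
  have hIA : Integrable (fun x : ℝ => ((starRingEnd ℂ) (f x) * Complex.I) * h x) volume :=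
    bdd_mul_schwartz_integrable h _
      ((Complex.continuous_conj.comp f.continuous).mul continuous_const).aestronglyMeasurable
      (hbdC f)
  have hIB : Integrable (fun x : ℝ => Complex.I * ((lam * (‖f x‖ ^ 2 * ‖f x‖ ^ 2) : ℝ) : ℂ))
      volume := by
    apply Integrable.const_mul
    apply Integrable.ofReal
    have hr : Integrable (fun x : ℝ => (lam * ‖f x‖ ^ 3) * ‖f x‖) volume := by
      apply (f.integrable.norm).bdd_mul_old
      · exact (continuous_const.mul ((f.continuous.norm).pow 3)).aestronglyMeasurable
      · obtain ⟨C, hC⟩ := schwartz_bdd f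
        have hC0 : 0 ≤ C := le_trans (norm_nonneg _) (hC 0)
        refine ⟨|lam| * C ^ 3, fun x => ?_⟩
        have : ‖lam * ‖f x‖ ^ 3‖ = |lam| * ‖f x‖ ^ 3 := by
          rw [Real.norm_eq_abs, abs_mul, _root_.abs_of_nonneg (by positivity : (0:ℝ) ≤ ‖f x‖ ^ 3)]
        rw [this]
        gcongr
        exact hC x
    apply hr.congr
    filter_upwards with x
    show lam * ‖f x‖ ^ 3 * ‖f x‖ = lam * (‖f x‖ ^ 2 * ‖f x‖ ^ 2)
    ring
  rw [hsplit, integral_add hIA hIB, Complex.add_re]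
  have hB : (∫ x : ℝ, Complex.I * ((lam * (‖f x‖ ^ 2 * ‖f x‖ ^ 2) : ℝ) : ℂ)).re = 0 := by
    rw [integral_const_mul, integral_complex_ofReal_aux (fun a => lam * (‖f a‖ ^ 2 * ‖f a‖ ^ 2))]
    simp
  have hA : (∫ x : ℝ, ((starRingEnd ℂ) (f x) * Complex.I) * h x).re = 0 := by
    have h2 : (fun x : ℝ => ((starRingEnd ℂ) (f x) * Complex.I) * h x)
        = fun x : ℝ => Complex.I * ((starRingEnd ℂ) (f x) * h x) := by
      funext x; ring
    rw [h2, integral_const_mul]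
    have h3 : (∫ x : ℝ, (starRingEnd ℂ) (f x) * h x)
        = - ∫ x : ℝ, (starRingEnd ℂ) (g x) * g x := by
      have h5 := schwartz_ibp f
      rwa [hh, hg] at h5
    have h4 : (∫ x : ℝ, (starRingEnd ℂ) (g x) * g x)
        = ((∫ x : ℝ, ‖g x‖ ^ 2 : ℝ) : ℂ) := by
      rw [show (fun x : ℝ => (starRingEnd ℂ) (g x) * g x)
          = fun x : ℝ => ((‖g x‖ ^ 2 : ℝ) : ℂ) by
        funext x
        rw [RCLike.conj_mul (g x)]
        norm_cast]
      exact integral_complex_ofReal_aux _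
    rw [h3, h4]
    simp
  rw [hA, hB]
  norm_num


/-- Charge conservation for the deterministic NLS flow: if the curve
`t ↦ u(t)`, regarded as a curve in `L²(ℝ;ℂ)` (via an `L²` representative `U`), is
differentiable at every `t` with derivative the `L²` class of
`i u(t)'' + iλ|u(t)|²u(t)`, then `t ↦ ∫|u(t)|²` is constant. -/
theorem stmt3 (lam : ℝ) (u : ℝ → SchwartzMap ℝ ℂ)
    (U : ℝ → Lp ℂ 2 (volume : Measure ℝ))
    (hU : ∀ t, (U t : ℝ → ℂ) =ᵐ[volume] u t)
    (hderiv : ∀ t : ℝ, ∃ d : Lp ℂ 2 (volume : Measure ℝ),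
      HasDerivAt U d t ∧
        (d : ℝ → ℂ) =ᵐ[volume] fun x : ℝ =>
          Complex.I * deriv (deriv (u t)) x
            + Complex.I * (lam : ℂ) * ((‖u t x‖ ^ 2 : ℝ) : ℂ) * u t x) :
    ∀ s t : ℝ, ∫ x : ℝ, ‖u t x‖ ^ 2 = ∫ x : ℝ, ‖u s x‖ ^ 2 := by
  set F : ℝ → ℝ := fun τ => (@inner ℂ _ _ (U τ) (U τ)).re with hFdef
  have hF0 : ∀ τ : ℝ, HasDerivAt F 0 τ := by
    intro τ
    obtain ⟨d, hd, hda⟩ := hderiv τ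
    have h1 : HasDerivAt (fun σ => (@inner ℂ _ _ (U σ) (U σ) : ℂ))
        (@inner ℂ _ _ (U τ) d + @inner ℂ _ _ d (U τ)) τ := HasDerivAt.inner ℂ hd hd
    have h2 : HasDerivAt F ((@inner ℂ _ _ (U τ) d + @inner ℂ _ _ d (U τ)).re) τ :=
      (Complex.reCLM.hasFDerivAt).comp_hasDerivAt τ h1
    have hre : (@inner ℂ _ _ (U τ) d).re = 0 := by
      have hinner : (@inner ℂ _ _ (U τ) d : ℂ)
          = ∫ x : ℝ, (starRingEnd ℂ) ((U τ : ℝ → ℂ) x) * (d : ℝ → ℂ) x := by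
        rw [MeasureTheory.L2.inner_def]
        simp_rw [RCLike.inner_apply]
        exact integral_congr_ae (ae_of_all _ fun x => mul_comm _ _)
      have hcongr : (∫ x : ℝ, (starRingEnd ℂ) ((U τ : ℝ → ℂ) x) * (d : ℝ → ℂ) x)
          = ∫ x : ℝ, (starRingEnd ℂ) (u τ x) *
              (Complex.I * deriv (deriv (u τ)) x
                + Complex.I * (lam : ℂ) * ((‖u τ x‖ ^ 2 : ℝ) : ℂ) * u τ x) := by
        apply integral_congr_ae
        filter_upwards [hU τ, hda] with x hx1 hx2
        rw [hx1, hx2]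
      rw [hinner, hcongr]
      exact key lam (u τ)
    have hzero : (@inner ℂ _ _ (U τ) d + @inner ℂ _ _ d (U τ)).re = 0 := by
      rw [Complex.add_re]
      have hconj : (@inner ℂ _ _ d (U τ) : ℂ) = (starRingEnd ℂ) (@inner ℂ _ _ (U τ) d) :=
        (inner_conj_symm d (U τ)).symm
      rw [hconj, Complex.conj_re, hre]
      norm_num
    rwa [hzero] at h2
  have hconst : ∀ a b : ℝ, F a = F b :=
    is_const_of_deriv_eq_zero (fun τ => (hF0 τ).differentiableAt) (fun τ => (hF0 τ).deriv)
  have hFeq : ∀ τ : ℝ, F τ = ∫ x : ℝ, ‖u τ x‖ ^ 2 := by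
    intro τ
    have h1 : (@inner ℂ _ _ (U τ) (U τ) : ℂ)
        = ∫ x : ℝ, (starRingEnd ℂ) ((U τ : ℝ → ℂ) x) * (U τ : ℝ → ℂ) x := by
      rw [MeasureTheory.L2.inner_def]
      simp_rw [RCLike.inner_apply]
      exact integral_congr_ae (ae_of_all _ fun x => mul_comm _ _)
    have h2 : (∫ x : ℝ, (starRingEnd ℂ) ((U τ : ℝ → ℂ) x) * (U τ : ℝ → ℂ) x)
        = ∫ x : ℝ, ((‖u τ x‖ ^ 2 : ℝ) : ℂ) := by
      apply integral_congr_ae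
      filter_upwards [hU τ] with x hx
      rw [hx, RCLike.conj_mul]
      norm_cast
    show (@inner ℂ _ _ (U τ) (U τ) : ℂ).re = _
    rw [h1, h2, integral_complex_ofReal_aux (fun x => ‖u τ x‖ ^ 2)]
    simp
  intro s t
  rw [← hFeq t, ← hFeq s]
  exact hconst t s
end Stmt3Aux
end

section
/- For every u ∈ 𝓢(ℝ;ℂ): ∫_ℝ |u(x)|⁴ dx ≤ 2·(∫_ℝ |u'(x)|² dx)^{1/2} · (∫_ℝ |u(x)|² dx)^{3/2}. -/
open MeasureTheory Filter Topology

/-- The one-dimensional Gagliardo–Nirenberg inequality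
`‖u‖_{L⁴}⁴ ≤ 2‖u'‖_{L²}·‖u‖_{L²}³` for Schwartz functions. -/
theorem stmt6 (u : SchwartzMap ℝ ℂ) :
    ∫ x : ℝ, ‖u x‖ ^ 4 ≤
      2 * (∫ x : ℝ, ‖deriv u x‖ ^ 2) ^ ((1 : ℝ) / 2)
        * (∫ x : ℝ, ‖u x‖ ^ 2) ^ ((3 : ℝ) / 2) := by
  set v : SchwartzMap ℝ ℂ := SchwartzMap.derivCLM ℝ ℂ u with hvdef
  have hvx : ∀ x, v x = deriv u x := fun x => SchwartzMap.derivCLM_apply ℝ u x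
  -- boundedness of u and v
  obtain ⟨C, hC⟩ : ∃ C, ∀ x, ‖u x‖ ≤ C :=
    ⟨‖u.toBoundedContinuousFunction‖, fun x => by
      simpa using u.toBoundedContinuousFunction.norm_coe_le_norm x⟩
  obtain ⟨D, hD⟩ : ∃ D, ∀ x, ‖v x‖ ≤ D :=
    ⟨‖v.toBoundedContinuousFunction‖, fun x => by
      simpa using v.toBoundedContinuousFunction.norm_coe_le_norm x⟩
  have hC0 : 0 ≤ C := le_trans (norm_nonneg _) (hC 0)
  -- integrability facts
  have hui : Integrable (fun x => ‖u x‖) := u.integrable.norm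
  have hvi : Integrable (fun x => ‖v x‖) := v.integrable.norm
  have hu2 : Integrable (fun x => ‖u x‖ ^ 2) := by
    refine (hui.const_mul C).mono' ((u.continuous.norm.pow 2).aestronglyMeasurable) ?_
    filter_upwards with x
    rw [Real.norm_of_nonneg (by positivity), pow_two]
    exact mul_le_mul_of_nonneg_right (hC x) (norm_nonneg _)
  have hv2 : Integrable (fun x => ‖v x‖ ^ 2) := by
    refine (hvi.const_mul D).mono' ((v.continuous.norm.pow 2).aestronglyMeasurable) ?_
    filter_upwards with x
    rw [Real.norm_of_nonneg (by positivity), pow_two]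
    exact mul_le_mul_of_nonneg_right (hD x) (norm_nonneg _)
  have hu4 : Integrable (fun x => ‖u x‖ ^ 4) := by
    refine (hu2.const_mul (C ^ 2)).mono' ((u.continuous.norm.pow 4).aestronglyMeasurable) ?_
    filter_upwards with x
    rw [Real.norm_of_nonneg (by positivity)]
    have h1 : ‖u x‖ ^ 2 ≤ C ^ 2 := pow_le_pow_left₀ (norm_nonneg _) (hC x) 2
    calc ‖u x‖ ^ 4 = ‖u x‖ ^ 2 * ‖u x‖ ^ 2 := by ring
    _ ≤ C ^ 2 * ‖u x‖ ^ 2 := mul_le_mul_of_nonneg_right h1 (by positivity)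
  have huv : Integrable (fun x => ‖u x‖ * ‖v x‖) := by
    refine (hvi.const_mul C).mono' ((u.continuous.norm.mul v.continuous.norm).aestronglyMeasurable) ?_
    filter_upwards with x
    rw [Real.norm_of_nonneg (by positivity)]
    exact mul_le_mul_of_nonneg_right (hC x) (norm_nonneg _)
  -- derivative of ‖u‖²
  set g : ℝ → ℝ := fun x => 2 * ((u x).re * (v x).re + (u x).im * (v x).im) with hgdef
  have hg_bound : ∀ x, |g x| ≤ 2 * (‖u x‖ * ‖v x‖) := by
    intro x
    have h1 : (u x).re * (v x).re + (u x).im * (v x).im = ((starRingEnd ℂ) (u x) * v x).re := by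
      simp [Complex.mul_re]
    have h2 : |((starRingEnd ℂ) (u x) * v x).re| ≤ ‖u x‖ * ‖v x‖ := by
      calc |((starRingEnd ℂ) (u x) * v x).re| ≤ ‖(starRingEnd ℂ) (u x) * v x‖ :=
        Complex.abs_re_le_norm _
      _ = ‖u x‖ * ‖v x‖ := by rw [norm_mul, RCLike.norm_conj]
    calc |g x| = 2 * |((starRingEnd ℂ) (u x) * v x).re| := by
          rw [show g x = 2 * ((u x).re * (v x).re + (u x).im * (v x).im) from rfl,
            h1, abs_mul, abs_two]
    _ ≤ 2 * (‖u x‖ * ‖v x‖) := by linarith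
  have hg_cont : Continuous g :=
    continuous_const.mul
      (((Complex.continuous_re.comp u.continuous).mul
          (Complex.continuous_re.comp v.continuous)).add
        ((Complex.continuous_im.comp u.continuous).mul
          (Complex.continuous_im.comp v.continuous)))
  have hgi : Integrable g := by
    refine (huv.const_mul 2).mono' hg_cont.aestronglyMeasurable ?_
    filter_upwards with x
    rw [Real.norm_eq_abs]
    exact hg_bound x
  have hderiv : ∀ x, HasDerivAt (fun t => ‖u t‖ ^ 2) (g x) x := by
    intro x
    have hu' : HasDerivAt (⇑u) (v x) x := by
      rw [hvx]; exact (u.differentiable x).hasDerivAt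
    have hre : HasDerivAt (fun t => (u t).re) ((v x).re) x :=
      Complex.reCLM.hasFDerivAt.comp_hasDerivAt x hu'
    have him : HasDerivAt (fun t => (u t).im) ((v x).im) x :=
      Complex.imCLM.hasFDerivAt.comp_hasDerivAt x hu'
    have h : HasDerivAt (fun t => (u t).re ^ 2 + (u t).im ^ 2)
        ((2 : ℕ) * (u x).re ^ 1 * (v x).re + (2 : ℕ) * (u x).im ^ 1 * (v x).im) x :=
      (hre.pow 2).add (him.pow 2)
    have heq : (fun t : ℝ => ‖u t‖ ^ 2) = fun t => (u t).re ^ 2 + (u t).im ^ 2 := by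
      funext t
      rw [Complex.sq_norm, Complex.normSq_apply]; ring
    rw [heq]
    convert h using 1
    rw [hgdef]; push_cast; ring
  have htend : Tendsto (fun t : ℝ => ‖u t‖ ^ 2) atBot (𝓝 0) := by
    have h1 : Tendsto u (cocompact ℝ) (𝓝 0) := zero_at_infty u
    have h2 : Tendsto (⇑u) atBot (𝓝 (0 : ℂ)) := h1.mono_left atBot_le_cocompact
    have := h2.norm.pow 2
    simpa using this
  -- pointwise sup bound
  set M : ℝ := ∫ x, 2 * (‖u x‖ * ‖v x‖) with hMdef
  have hbound : ∀ a, ‖u a‖ ^ 2 ≤ M := by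
    intro a
    have hftc := integral_Iic_of_hasDerivAt_of_tendsto' (a := a)
      (fun x _ => hderiv x) hgi.integrableOn htend
    calc ‖u a‖ ^ 2 = ∫ x in Set.Iic a, g x := by rw [hftc, sub_zero]
    _ ≤ ∫ x in Set.Iic a, 2 * (‖u x‖ * ‖v x‖) := by
        refine setIntegral_mono_on hgi.integrableOn (huv.const_mul 2).integrableOn
          measurableSet_Iic (fun x _ => ?_)
        exact le_trans (le_abs_self _) (hg_bound x)
    _ ≤ M := setIntegral_le_integral (huv.const_mul 2)
        (Eventually.of_forall fun x => by positivity)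
  set A : ℝ := ∫ x, ‖u x‖ ^ 2 with hAdef
  set B : ℝ := ∫ x, ‖v x‖ ^ 2 with hBdef
  have hA0 : 0 ≤ A := integral_nonneg fun x => by positivity
  have hB0 : 0 ≤ B := integral_nonneg fun x => by positivity
  -- Hölder / Cauchy–Schwarz
  have hpq : Real.HolderConjugate 2 2 := Real.holderConjugate_iff.mpr ⟨by norm_num, by norm_num⟩
  have hm2 : (ENNReal.ofReal (2 : ℝ)) = 2 := by
    rw [ENNReal.ofReal_ofNat]
  have hmv : MemLp (fun x => ‖v x‖) (ENNReal.ofReal 2) (volume : Measure ℝ) := by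
    rw [hm2]
    exact (memLp_two_iff_integrable_sq v.continuous.norm.aestronglyMeasurable).2 hv2
  have hmu : MemLp (fun x => ‖u x‖) (ENNReal.ofReal 2) (volume : Measure ℝ) := by
    rw [hm2]
    exact (memLp_two_iff_integrable_sq u.continuous.norm.aestronglyMeasurable).2 hu2
  have hholder := integral_mul_le_Lp_mul_Lq_of_nonneg hpq
    (Eventually.of_forall fun x => norm_nonneg (v x))
    (Eventually.of_forall fun x => norm_nonneg (u x)) hmv hmu
  have hrpow_eq : ∀ f : ℝ → ℂ, (∫ x, ‖f x‖ ^ (2 : ℝ)) = ∫ x, ‖f x‖ ^ 2 := by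
    intro f
    simp_rw [show (2 : ℝ) = ((2 : ℕ) : ℝ) by norm_num, Real.rpow_natCast]
  have hcs : ∫ x, ‖u x‖ * ‖v x‖ ≤ B ^ ((1 : ℝ) / 2) * A ^ ((1 : ℝ) / 2) := by
    have h1 : (∫ x, ‖v x‖ * ‖u x‖) = ∫ x, ‖u x‖ * ‖v x‖ := by
      refine integral_congr_ae (Eventually.of_forall fun x => ?_); ring
    rw [← h1]
    calc (∫ x, ‖v x‖ * ‖u x‖)
        ≤ (∫ x, ‖v x‖ ^ (2 : ℝ)) ^ ((1 : ℝ) / 2) * (∫ x, ‖u x‖ ^ (2 : ℝ)) ^ ((1 : ℝ) / 2) :=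
          hholder
    _ = B ^ ((1 : ℝ) / 2) * A ^ ((1 : ℝ) / 2) := by rw [hrpow_eq, hrpow_eq]
  have hM_le : M ≤ 2 * (B ^ ((1 : ℝ) / 2) * A ^ ((1 : ℝ) / 2)) := by
    rw [hMdef, integral_const_mul]
    linarith [hcs]
  -- main chain
  have hmain : (∫ x, ‖u x‖ ^ 4) ≤ M * A := by
    calc (∫ x, ‖u x‖ ^ 4) ≤ ∫ x, M * ‖u x‖ ^ 2 := by
          refine integral_mono hu4 (hu2.const_mul M) fun x => ?_
          calc ‖u x‖ ^ 4 = ‖u x‖ ^ 2 * ‖u x‖ ^ 2 := by ring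
          _ ≤ M * ‖u x‖ ^ 2 := mul_le_mul_of_nonneg_right (hbound x) (by positivity)
    _ = M * A := by rw [integral_const_mul]
  have hBv : (∫ x : ℝ, ‖deriv u x‖ ^ 2) = B := by
    rw [hBdef]; exact integral_congr_ae (Eventually.of_forall fun x => by simp only [hvx])
  rw [hBv]
  have hA32 : A ^ ((3 : ℝ) / 2) = A ^ ((1 : ℝ) / 2) * A := by
    have : ((3 : ℝ) / 2) = (1 : ℝ) / 2 + 1 := by norm_num
    rw [this, Real.rpow_add' hA0 (by norm_num), Real.rpow_one]
  calc (∫ x, ‖u x‖ ^ 4) ≤ M * A := hmain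
  _ ≤ 2 * (B ^ ((1 : ℝ) / 2) * A ^ ((1 : ℝ) / 2)) * A :=
      mul_le_mul_of_nonneg_right hM_le hA0
  _ = 2 * B ^ ((1 : ℝ) / 2) * A ^ ((3 : ℝ) / 2) := by rw [hA32]; ring
end

section
/- For every u ∈ 𝓢(ℝ;ℂ) and every x ∈ ℝ: |u(x)|² ≤ 2·(∫_ℝ |u(y)|² dy)^{1/2} · (∫_ℝ |u'(y)|² dy)^{1/2}. In particular sup_x |u(x)|² ≤ 2‖u‖·‖u'‖. -/
open MeasureTheory Filter Set
open scoped ENNReal Topology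

/-- One-dimensional Agmon inequality: for every Schwartz `u` and `x`,
`|u(x)|² ≤ 2‖u‖_{L²}‖u'‖_{L²}`; in particular the same bound holds for `sup_x |u(x)|²`. -/
theorem stmt7 (u : SchwartzMap ℝ ℂ) :
    (∀ x : ℝ, ‖u x‖ ^ 2 ≤
        2 * (∫ y : ℝ, ‖u y‖ ^ 2) ^ ((1 : ℝ) / 2)
          * (∫ y : ℝ, ‖deriv u y‖ ^ 2) ^ ((1 : ℝ) / 2)) ∧
      (⨆ x : ℝ, ‖u x‖ ^ 2) ≤
        2 * (∫ y : ℝ, ‖u y‖ ^ 2) ^ ((1 : ℝ) / 2)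
          * (∫ y : ℝ, ‖deriv u y‖ ^ 2) ^ ((1 : ℝ) / 2) := by
  have hconj : Real.HolderConjugate 2 2 := Real.holderConjugate_iff.mpr ⟨one_lt_two, by norm_num⟩
  set v : SchwartzMap ℝ ℂ := SchwartzMap.derivCLM ℝ ℂ u with hv
  have hvx : ∀ x : ℝ, v x = deriv u x := fun x => SchwartzMap.derivCLM_apply ℝ u x
  -- square integrability of Schwartz functions
  have hsq : ∀ f : SchwartzMap ℝ ℂ, Integrable (fun y : ℝ => ‖f y‖ ^ 2) := by
    intro f
    set C : ℝ := ‖f.toBoundedContinuousFunction‖ with hC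
    have hCb : ∀ y : ℝ, ‖f y‖ ≤ C := fun y =>
      f.toBoundedContinuousFunction.norm_coe_le_norm y
    refine ((f.integrable (μ := volume)).norm.const_mul C).mono'
      ((f.continuous.norm.pow 2).aestronglyMeasurable) ?_
    filter_upwards with y
    rw [Real.norm_of_nonneg (by positivity)]
    calc ‖f y‖ ^ 2 = ‖f y‖ * ‖f y‖ := sq ‖f y‖
      _ ≤ C * ‖f y‖ := mul_le_mul_of_nonneg_right (hCb y) (norm_nonneg _)
  have hmem : ∀ f : SchwartzMap ℝ ℂ, MemLp (⇑f) (ENNReal.ofReal 2) volume := by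
    intro f
    have h2 : (ENNReal.ofReal 2) = (2 : ℝ≥0∞) := by norm_num
    rw [h2]
    exact (memLp_two_iff_integrable_sq_norm f.continuous.aestronglyMeasurable).2 (hsq f)
  -- integrability of the product
  have huv : Integrable (fun y : ℝ => ‖u y‖ * ‖v y‖) := by
    set C : ℝ := ‖u.toBoundedContinuousFunction‖ with hC
    have hCb : ∀ y : ℝ, ‖u y‖ ≤ C := fun y =>
      u.toBoundedContinuousFunction.norm_coe_le_norm y
    refine ((v.integrable (μ := volume)).norm.const_mul C).mono'
      ((u.continuous.norm.mul v.continuous.norm).aestronglyMeasurable) ?_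
    filter_upwards with y
    rw [Real.norm_of_nonneg (by positivity)]
    exact mul_le_mul_of_nonneg_right (hCb y) (norm_nonneg _)
  -- Cauchy–Schwarz
  have CS : ∫ y : ℝ, ‖u y‖ * ‖v y‖ ≤
      (∫ y : ℝ, ‖u y‖ ^ 2) ^ ((1:ℝ)/2) * (∫ y : ℝ, ‖v y‖ ^ 2) ^ ((1:ℝ)/2) := by
    have := integral_mul_norm_le_Lp_mul_Lq (μ := volume) hconj (hmem u) (hmem v)
    simpa [Real.rpow_two, Real.rpow_natCast] using this
  -- pointwise key bound
  have key : ∀ x : ℝ, ‖u x‖ ^ 2 ≤ 2 * ∫ y : ℝ, ‖u y‖ * ‖v y‖ := by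
    intro x
    set g' : ℝ → ℝ := fun y => 2 * (inner ℝ (u y) (v y) : ℝ) with hg'
    have hder : ∀ y : ℝ, HasDerivAt (fun t => ‖u t‖ ^ 2) (g' y) y := by
      intro y
      have hd : HasDerivAt (⇑u) (deriv u y) y :=
        (u.differentiableAt).hasDerivAt
      simpa [hg', hvx y] using hd.norm_sq
    have hbound : ∀ y : ℝ, g' y ≤ 2 * (‖u y‖ * ‖v y‖) := by
      intro y
      exact mul_le_mul_of_nonneg_left (real_inner_le_norm (u y) (v y)) (by norm_num)
    have habs : ∀ y : ℝ, ‖g' y‖ ≤ 2 * (‖u y‖ * ‖v y‖) := by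
      intro y
      rw [Real.norm_eq_abs]
      show |2 * (inner ℝ (u y) (v y) : ℝ)| ≤ _
      rw [abs_mul, abs_two]
      exact mul_le_mul_of_nonneg_left (abs_real_inner_le_norm (u y) (v y)) (by norm_num)
    have hg'int : Integrable g' := by
      have hcont : Continuous fun y : ℝ => (inner ℝ (u y) (v y) : ℝ) :=
        Continuous.inner u.continuous v.continuous
      refine (huv.const_mul 2).mono'
        ((continuous_const.mul hcont).aestronglyMeasurable) ?_
      filter_upwards with y
      simpa [mul_assoc] using habs y
    have htends : Tendsto (fun t : ℝ => ‖u t‖ ^ 2) atBot (𝓝 0) := by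
      have h0 : Tendsto (⇑u) (cocompact ℝ) (𝓝 0) := u.toZeroAtInfty.zero_at_infty'
      have h1 : Tendsto (⇑u) atBot (𝓝 0) := h0.mono_left atBot_le_cocompact
      simpa using (h1.norm.pow 2)
    have hFTC : ∫ y in Iic x, g' y = ‖u x‖ ^ 2 - 0 :=
      integral_Iic_of_hasDerivAt_of_tendsto' (fun y _ => hder y)
        (hg'int.integrableOn) htends
    have h1 : ‖u x‖ ^ 2 = ∫ y in Iic x, g' y := by rw [hFTC, sub_zero]
    rw [h1]
    calc ∫ y in Iic x, g' y ≤ ∫ y in Iic x, 2 * (‖u y‖ * ‖v y‖) := by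
          refine setIntegral_mono hg'int.integrableOn (huv.const_mul 2).integrableOn ?_
          exact fun y => hbound y
      _ ≤ ∫ y : ℝ, 2 * (‖u y‖ * ‖v y‖) := by
          refine setIntegral_le_integral (huv.const_mul 2) ?_
          filter_upwards with y
          positivity
      _ = 2 * ∫ y : ℝ, ‖u y‖ * ‖v y‖ := integral_const_mul 2 _
  have main : ∀ x : ℝ, ‖u x‖ ^ 2 ≤
      2 * (∫ y : ℝ, ‖u y‖ ^ 2) ^ ((1:ℝ)/2) * (∫ y : ℝ, ‖deriv u y‖ ^ 2) ^ ((1:ℝ)/2) := by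
    intro x
    have h2 : (∫ y : ℝ, ‖deriv u y‖ ^ 2) = ∫ y : ℝ, ‖v y‖ ^ 2 := by
      exact integral_congr_ae (Filter.Eventually.of_forall fun y => by simp [hvx])
    rw [h2, mul_assoc]
    calc ‖u x‖ ^ 2 ≤ 2 * ∫ y : ℝ, ‖u y‖ * ‖v y‖ := key x
      _ ≤ 2 * ((∫ y : ℝ, ‖u y‖ ^ 2) ^ ((1:ℝ)/2) * (∫ y : ℝ, ‖v y‖ ^ 2) ^ ((1:ℝ)/2)) :=
          mul_le_mul_of_nonneg_left CS (by norm_num)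
  refine ⟨main, ciSup_le main⟩
end

section
/- For every θ ∈ ℝ: |(1 − iθ/2)·e^{iθ} − (1 + iθ/2)| ≤ |θ|³/12, and consequently |e^{iθ} − (1 + iθ/2)/(1 − iθ/2)| ≤ |θ|³/12. -/
open Complex

noncomputable def Ff (t : ℝ) : ℂ :=
  (1 - Complex.I * (t : ℂ) / 2) * Complex.exp (Complex.I * t) - (1 + Complex.I * (t : ℂ) / 2)

noncomputable def Ff1 (t : ℝ) : ℂ :=
  Complex.I * Complex.exp (Complex.I * t) * (1/2 - Complex.I * t / 2) - Complex.I / 2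

noncomputable def Ff2 (t : ℝ) : ℂ := (Complex.I * t / 2) * Complex.exp (Complex.I * t)

lemma expDeriv (t : ℝ) :
    HasDerivAt (fun s : ℝ => Complex.exp (Complex.I * s)) (Complex.I * Complex.exp (Complex.I * t)) t := by
  have h : HasDerivAt (fun z : ℂ => Complex.exp (Complex.I * z))
      (Complex.exp (Complex.I * (t:ℂ)) * Complex.I) (t:ℂ) :=
    (Complex.hasDerivAt_exp (Complex.I * t)).comp (t:ℂ)
      (by simpa using (hasDerivAt_id (t:ℂ)).const_mul Complex.I)
  rw [show Complex.I * Complex.exp (Complex.I * (t:ℂ))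
      = Complex.exp (Complex.I * (t:ℂ)) * Complex.I from mul_comm _ _]
  exact h.comp_ofReal

lemma ofRealDeriv (t : ℝ) : HasDerivAt (fun s : ℝ => (s : ℂ)) 1 t :=
  Complex.ofRealCLM.hasDerivAt

lemma hFf1 (t : ℝ) : HasDerivAt Ff (Ff1 t) t := by
  have h1 : HasDerivAt (fun s : ℝ => (1 - Complex.I * (s:ℂ)/2)) (-(Complex.I/2)) t := by
    have := (((ofRealDeriv t).const_mul Complex.I).div_const 2).const_sub 1
    simpa using this
  have h2 := (h1.mul (expDeriv t))
  have h3 : HasDerivAt (fun s : ℝ => (1 + Complex.I * (s:ℂ)/2)) (Complex.I/2) t := by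
    have := (((ofRealDeriv t).const_mul Complex.I).div_const 2).const_add 1
    simpa using this
  have := h2.sub h3
  refine this.congr_deriv (Eq.symm ?_)
  unfold Ff1
  ring

lemma hFf2 (t : ℝ) : HasDerivAt Ff1 (Ff2 t) t := by
  have h1 : HasDerivAt (fun s : ℝ => Complex.I * Complex.exp (Complex.I * s)) (Complex.I * (Complex.I * Complex.exp (Complex.I * t))) t :=
    (expDeriv t).const_mul Complex.I
  have h2 : HasDerivAt (fun s : ℝ => (1/2 - Complex.I * (s:ℂ)/2)) (-(Complex.I/2)) t := by
    have := (((ofRealDeriv t).const_mul Complex.I).div_const 2).const_sub (1/2 : ℂ)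
    simpa using this
  have := (h1.mul h2).sub_const (Complex.I / 2)
  refine this.congr_deriv (Eq.symm ?_)
  unfold Ff2
  linear_combination (Complex.I * t * Complex.exp (Complex.I * t) / 2) * Complex.I_sq

example : True := trivial

lemma normFf2 (t : ℝ) : ‖Ff2 t‖ = |t| / 2 := by
  have h1 : ‖Complex.exp (Complex.I * t)‖ = 1 := by
    rw [mul_comm]; exact Complex.norm_exp_ofReal_mul_I t
  rw [Ff2, norm_mul, h1, mul_one, norm_div]
  simp [norm_mul]

lemma contFf1 : Continuous Ff1 := by
  unfold Ff1; fun_prop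

lemma contFf2 : Continuous Ff2 := by
  unfold Ff2; fun_prop

lemma key_s12 (θ : ℝ) (hθ : 0 ≤ θ) : ‖Ff θ‖ ≤ θ ^ 3 / 12 := by
  have hF1eq : ∀ s : ℝ, Ff1 s = ∫ t in (0:ℝ)..s, Ff2 t := by
    intro s
    have h := intervalIntegral.integral_eq_sub_of_hasDerivAt (fun t _ => hFf2 t)
      (contFf2.intervalIntegrable 0 s)
    have h0 : Ff1 0 = 0 := by simp [Ff1]; ring
    rw [h, h0, sub_zero]
  have hbound1 : ∀ s ∈ Set.Icc (0:ℝ) θ, ‖Ff1 s‖ ≤ s ^ 2 / 4 := by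
    intro s hs
    rw [hF1eq s]
    have hle : ‖∫ t in (0:ℝ)..s, Ff2 t‖ ≤ |∫ t in (0:ℝ)..s, t / 2| := by
      apply intervalIntegral.norm_integral_le_abs_of_norm_le
      · filter_upwards [MeasureTheory.ae_restrict_mem measurableSet_uIoc] with t ht
        rw [Set.uIoc_of_le hs.1] at ht
        rw [normFf2, _root_.abs_of_pos ht.1]
      · exact (continuous_id.div_const 2).intervalIntegrable 0 s
    refine hle.trans ?_
    rw [intervalIntegral.integral_div, integral_id,
      show ((s ^ 2 - 0 ^ 2) / 2) / 2 = s ^ 2 / 4 by ring,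
      _root_.abs_of_nonneg (by positivity)]
  have hFeq : Ff θ = ∫ s in (0:ℝ)..θ, Ff1 s := by
    have h := intervalIntegral.integral_eq_sub_of_hasDerivAt (fun t _ => hFf1 t)
      (contFf1.intervalIntegrable 0 θ)
    have h0 : Ff 0 = 0 := by simp [Ff]
    rw [h, h0, sub_zero]
  rw [hFeq]
  have hle : ‖∫ s in (0:ℝ)..θ, Ff1 s‖ ≤ |∫ s in (0:ℝ)..θ, s ^ 2 / 4| := by
    apply intervalIntegral.norm_integral_le_abs_of_norm_le
    · filter_upwards [MeasureTheory.ae_restrict_mem measurableSet_uIoc] with s hs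
      rw [Set.uIoc_of_le hθ] at hs
      exact hbound1 s ⟨hs.1.le, hs.2⟩
    · exact ((continuous_pow 2).div_const 4).intervalIntegrable 0 θ
  refine hle.trans ?_
  rw [intervalIntegral.integral_div, integral_pow,
    show (θ ^ (2 + 1) - 0 ^ (2 + 1)) / (((2:ℕ):ℝ) + 1) / 4 = θ ^ 3 / 12 by push_cast; ring,
    _root_.abs_of_nonneg (by positivity)]

lemma keyAll (θ : ℝ) : ‖Ff θ‖ ≤ |θ| ^ 3 / 12 := by
  rcases le_or_gt 0 θ with h | h
  · rw [_root_.abs_of_nonneg h]; exact key_s12 θ h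
  · have hsymm : Ff θ = (starRingEnd ℂ) (Ff (-θ)) := by
      simp only [Ff, map_sub, map_mul, map_add, map_div₀, map_one, map_ofNat, map_neg,
        Complex.conj_I, Complex.conj_ofReal, ← Complex.exp_conj,
        Complex.ofReal_neg, neg_neg, neg_mul, mul_neg]
    rw [hsymm, RCLike.norm_conj, _root_.abs_of_neg h]
    exact key_s12 (-θ) (by linarith)


/-- Scalar Padé estimate for the Crank–Nicolson symbol: for real `θ`,
`|(1 − iθ/2)e^{iθ} − (1 + iθ/2)| ≤ |θ|³/12`, hence
`|e^{iθ} − (1 + iθ/2)/(1 − iθ/2)| ≤ |θ|³/12`. -/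
theorem stmt12 (θ : ℝ) :
    ‖(1 - Complex.I * (θ : ℂ) / 2) * Complex.exp (Complex.I * (θ : ℂ))
        - (1 + Complex.I * (θ : ℂ) / 2)‖ ≤ |θ| ^ 3 / 12 ∧
      ‖Complex.exp (Complex.I * (θ : ℂ))
          - (1 + Complex.I * (θ : ℂ) / 2) / (1 - Complex.I * (θ : ℂ) / 2)‖ ≤
        |θ| ^ 3 / 12 := by
  have h1 := keyAll θ
  rw [Ff] at h1
  refine ⟨h1, ?_⟩
  have hnorm : 1 ≤ ‖(1 : ℂ) - Complex.I * (θ : ℂ) / 2‖ := by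
    have h2 : ‖(1 : ℂ) - Complex.I * (θ : ℂ) / 2‖ ^ 2 = 1 + (θ / 2) ^ 2 := by
      rw [Complex.sq_norm, Complex.normSq_apply]
      simp
      ring
    nlinarith [norm_nonneg ((1 : ℂ) - Complex.I * (θ : ℂ) / 2), sq_nonneg (θ / 2)]
  have hd : (1 : ℂ) - Complex.I * (θ : ℂ) / 2 ≠ 0 := by
    intro h
    rw [h] at hnorm
    norm_num at hnorm
  have key2 : Complex.exp (Complex.I * (θ : ℂ))
      - (1 + Complex.I * (θ : ℂ) / 2) / (1 - Complex.I * (θ : ℂ) / 2)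
      = Ff θ / (1 - Complex.I * (θ : ℂ) / 2) := by
    have hd2 : (2 : ℂ) - Complex.I * (θ : ℂ) ≠ 0 := by
      intro h
      apply hd
      rw [show (1 : ℂ) - Complex.I * (θ : ℂ) / 2 = ((2 : ℂ) - Complex.I * θ) / 2 by ring, h]
      simp
    rw [Ff]
    field_simp
  calc ‖Complex.exp (Complex.I * (θ : ℂ))
      - (1 + Complex.I * (θ : ℂ) / 2) / (1 - Complex.I * (θ : ℂ) / 2)‖
      = ‖Ff θ‖ / ‖(1 : ℂ) - Complex.I * (θ : ℂ) / 2‖ := by rw [key2, norm_div]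
    _ ≤ ‖Ff θ‖ := div_le_self (norm_nonneg _) hnorm
    _ ≤ |θ| ^ 3 / 12 := keyAll θ
end

section
/- For every τ ≥ 0 and every ξ ∈ ℝ: |e^{iτξ²} − (1 + iτξ²/2)/(1 − iτξ²/2)| ≤ τ²·ξ⁴. -/
open Complex

lemma sin_ge_sub_cube' (x : ℝ) (hx : 0 ≤ x) : x - x ^ 3 / 6 ≤ Real.sin x := by
  have hmono : MonotoneOn (fun y : ℝ => Real.sin y - y + y ^ 3 / 6) (Set.Ici 0) := by
    apply monotoneOn_of_deriv_nonneg (convex_Ici 0)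
    · exact (Real.continuous_sin.sub continuous_id).add
        ((continuous_pow 3).div_const 6) |>.continuousOn
    · intro y _
      exact (((Real.hasDerivAt_sin y).sub (hasDerivAt_id y)).add
        ((hasDerivAt_pow 3 y).div_const 6)).differentiableAt.differentiableWithinAt
    · intro y hy
      have h : HasDerivAt (fun y : ℝ => Real.sin y - y + y ^ 3 / 6)
          (Real.cos y - 1 + 3 * y ^ (3 - 1) / 6) y :=
        ((Real.hasDerivAt_sin y).sub (hasDerivAt_id y)).add
          ((hasDerivAt_pow 3 y).div_const 6)
      rw [h.deriv]
      have := Real.one_sub_sq_div_two_le_cos (x := y)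
      norm_num
      nlinarith
  have h0 : (fun y : ℝ => Real.sin y - y + y ^ 3 / 6) 0 ≤
      (fun y : ℝ => Real.sin y - y + y ^ 3 / 6) x :=
    hmono (Set.self_mem_Ici) hx hx
  simp at h0
  linarith

lemma core_ineq (t : ℝ) (ht : 0 ≤ t) :
    (Real.cos t + t / 2 * Real.sin t - 1) ^ 2
      + (Real.sin t - t / 2 * Real.cos t - t / 2) ^ 2
      ≤ (t ^ 2) ^ 2 * (1 + t ^ 2 / 4) := by
  set c := Real.cos t
  set s := Real.sin t
  have hsc : s ^ 2 + c ^ 2 = 1 := Real.sin_sq_add_cos_sq t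
  have hc1 : c ≤ 1 := Real.cos_le_one t
  have hc2 : 1 - t ^ 2 / 2 ≤ c := Real.one_sub_sq_div_two_le_cos
  have hs1 : s ≤ t := Real.sin_le ht
  have hs2 : t - t ^ 3 / 6 ≤ s := sin_ge_sub_cube' t ht
  have hs3 : -1 ≤ s := Real.neg_one_le_sin t
  rcases le_or_gt t 2 with h | h
  · nlinarith [mul_nonneg (by nlinarith : (0:ℝ) ≤ 2 - t ^ 2 / 2) (by linarith : (0:ℝ) ≤ c - (1 - t ^ 2 / 2)),
      mul_nonneg (by linarith : (0:ℝ) ≤ 2 * t) (by linarith : (0:ℝ) ≤ s - (t - t ^ 3 / 6)),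
      sq_nonneg t, sq_nonneg (t^2)]
  · nlinarith [mul_nonneg (by nlinarith : (0:ℝ) ≤ t ^ 2 / 2 - 2) (by linarith : (0:ℝ) ≤ 1 - c),
      mul_nonneg (by linarith : (0:ℝ) ≤ 2 * t) (by linarith : (0:ℝ) ≤ 1 + s),
      sq_nonneg (t^2 - 2), sq_nonneg t]

/-- Crank–Nicolson multiplier estimate at frequency `ξ`:
`|e^{iτξ²} − (1 + iτξ²/2)/(1 − iτξ²/2)| ≤ τ²ξ⁴` for `τ ≥ 0`. -/
theorem stmt13 (τ : ℝ) (hτ : 0 ≤ τ) (ξ : ℝ) :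
    ‖Complex.exp (Complex.I * ((τ * ξ ^ 2 : ℝ) : ℂ))
        - (1 + Complex.I * ((τ * ξ ^ 2 : ℝ) : ℂ) / 2)
          / (1 - Complex.I * ((τ * ξ ^ 2 : ℝ) : ℂ) / 2)‖ ≤ τ ^ 2 * ξ ^ 4 := by
  set t : ℝ := τ * ξ ^ 2 with htdef
  have ht0 : 0 ≤ t := mul_nonneg hτ (sq_nonneg ξ)
  have hgoal : τ ^ 2 * ξ ^ 4 = t ^ 2 := by rw [htdef]; ring
  rw [hgoal]
  set d : ℂ := 1 - Complex.I * (t : ℂ) / 2 with hddef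
  have hdre : d.re = 1 := by simp [hddef]
  have hdim : d.im = -(t / 2) := by simp [hddef]
  have hdnorm : ‖d‖ ^ 2 = 1 + t ^ 2 / 4 := by
    rw [Complex.sq_norm, Complex.normSq_apply, hdre, hdim]; ring
  have hd1 : 1 ≤ ‖d‖ := by nlinarith [norm_nonneg d, sq_nonneg t]
  have hdne : d ≠ 0 := by
    intro h; rw [h] at hdre; simp at hdre
  have hsplit : Complex.exp (Complex.I * (t : ℂ)) - (1 + Complex.I * (t : ℂ) / 2) / d
      = (Complex.exp (Complex.I * (t : ℂ)) * d - (1 + Complex.I * (t : ℂ) / 2)) / d := by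
    field_simp
  rw [hsplit, norm_div]
  set num := Complex.exp (Complex.I * (t : ℂ)) * d - (1 + Complex.I * (t : ℂ) / 2) with hnumdef
  have hexp : Complex.exp (Complex.I * (t : ℂ))
      = ((Real.cos t : ℝ) : ℂ) + ((Real.sin t : ℝ) : ℂ) * Complex.I := by
    rw [mul_comm, Complex.exp_mul_I]
    norm_cast
  have hnum : num = ((Real.cos t + t / 2 * Real.sin t - 1 : ℝ) : ℂ)
      + ((Real.sin t - t / 2 * Real.cos t - t / 2 : ℝ) : ℂ) * Complex.I := by
    rw [hnumdef, hexp, hddef]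
    push_cast
    ring_nf
    rw [Complex.I_sq]
    ring
  have hnormnum : ‖num‖ ^ 2 = (Real.cos t + t / 2 * Real.sin t - 1) ^ 2
      + (Real.sin t - t / 2 * Real.cos t - t / 2) ^ 2 := by
    rw [hnum, Complex.sq_norm, Complex.normSq_add_mul_I]
  have hkey : ‖num‖ ^ 2 ≤ (t ^ 2) ^ 2 * ‖d‖ ^ 2 := by
    rw [hnormnum, hdnorm]; exact core_ineq t ht0
  have h1 : ‖num‖ ≤ t ^ 2 * ‖d‖ := by
    have h2 := Real.sqrt_le_sqrt hkey
    rwa [Real.sqrt_sq (norm_nonneg _),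
      show (t ^ 2) ^ 2 * ‖d‖ ^ 2 = (t ^ 2 * ‖d‖) ^ 2 by ring,
      Real.sqrt_sq (by positivity)] at h2
  rw [div_le_iff₀ (by linarith : (0:ℝ) < ‖d‖)]
  exact h1
end
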